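/- Let A be a domain, σ an automorphism and δ a σ-derivation of A, and R = A[x; σ, δ]. Let c = dx + e with d,e ∈ A, d ≠ 0, be a normal element of R, with β the automorphism of R satisfying cr = β(r)c for all r ∈ R. Then β(A) = A, d is a normal element of A, and β(a)d = dσ(a) for all a ∈ A. Moreover, if e is regular modulo the ideal dA = Ad, then R/Rc is a domain. -/
import Mathlib

noncomputable section
open scoped BigOperators
open Finset

set_option linter.unusedSectionVars false

namespace JordanAux

variable {R : Type*} [Ring R] [IsDomain R] (A : Subring R) (x : R)

/-- `t` is an `A`-combination of `x^0, ..., x^(n-1)`. -/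
def LD (t : R) (n : ℕ) : Prop :=
  ∃ f : ℕ → A, t = ∑ i ∈ Finset.range n, (f i : R) * x ^ i

variable {A x}

lemma LD_zero (n : ℕ) : LD A x 0 n := ⟨0, by simp⟩

lemma LD_zero_deg {t : R} (h : LD A x t 0) : t = 0 := by
  obtain ⟨f, rfl⟩ := h; simp

lemma sum_pad {f : ℕ → A} {N M : ℕ} (h : ∀ i, N ≤ i → f i = 0) (hNM : N ≤ M) :
    ∑ i ∈ range M, (f i : R) * x ^ i = ∑ i ∈ range N, (f i : R) * x ^ i := by
  symm
  refine Finset.sum_subset (Finset.range_subset_range.2 hNM) ?_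
  intro i _ hi
  rw [h i (by simpa using hi)]
  simp

lemma LD_mono {t : R} {n m : ℕ} (h : LD A x t n) (hnm : n ≤ m) : LD A x t m := by
  obtain ⟨f, rfl⟩ := h
  refine ⟨fun i => if i < n then f i else 0, ?_⟩
  rw [sum_pad (f := fun i => if i < n then f i else 0) (fun i hi => by simp [Nat.not_lt.2 hi]) hnm]
  exact Finset.sum_congr rfl fun i hi => by rw [if_pos (Finset.mem_range.1 hi)]

lemma LD_add {t s : R} {n : ℕ} (ht : LD A x t n) (hs : LD A x s n) : LD A x (t + s) n := by
  obtain ⟨f, rfl⟩ := ht; obtain ⟨g, rfl⟩ := hs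
  refine ⟨f + g, ?_⟩
  rw [← Finset.sum_add_distrib]
  refine Finset.sum_congr rfl fun i _ => ?_
  simp only [Pi.add_apply]
  push_cast
  rw [add_mul]

lemma LD_neg {t : R} {n : ℕ} (ht : LD A x t n) : LD A x (-t) n := by
  obtain ⟨f, rfl⟩ := ht
  refine ⟨-f, ?_⟩
  rw [← Finset.sum_neg_distrib]
  refine Finset.sum_congr rfl fun i _ => ?_
  simp only [Pi.neg_apply]
  push_cast
  rw [neg_mul]

lemma LD_sub {t s : R} {n : ℕ} (ht : LD A x t n) (hs : LD A x s n) : LD A x (t - s) n := by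
  rw [sub_eq_add_neg]; exact LD_add ht (LD_neg hs)

lemma LD_lmul (a : A) {t : R} {n : ℕ} (ht : LD A x t n) : LD A x ((a : R) * t) n := by
  obtain ⟨f, rfl⟩ := ht
  refine ⟨fun i => a * f i, ?_⟩
  rw [Finset.mul_sum]
  refine Finset.sum_congr rfl fun i _ => ?_
  push_cast
  rw [mul_assoc]

lemma LD_single (a : A) (n : ℕ) : LD A x ((a : R) * x ^ n) (n + 1) := by
  refine ⟨fun i => if i = n then a else 0, ?_⟩
  rw [Finset.sum_eq_single n]
  · simp
  · intro i _ hi; simp [hi]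
  · intro h; exact absurd (Finset.self_mem_range_succ n) h

lemma LD_coe (a : A) : LD A x (a : R) 1 := by
  simpa using LD_single (x := x) a 0

lemma LD_sum {ι : Type*} (s : Finset ι) (F : ι → R) {n : ℕ}
    (h : ∀ i ∈ s, LD A x (F i) n) : LD A x (∑ i ∈ s, F i) n :=
  Finset.sum_induction F (fun t => LD A x t n) (fun _ _ ha hb => LD_add ha hb) (LD_zero n) h

lemma LD_mul_x {t : R} {n : ℕ} (ht : LD A x t n) : LD A x (t * x) (n + 1) := by
  obtain ⟨f, rfl⟩ := ht
  refine ⟨fun i => if i = 0 then 0 else f (i - 1), ?_⟩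
  rw [Finset.sum_range_succ' (fun i => (((if i = 0 then (0:A) else f (i-1)) : A) : R) * x ^ i) n]
  simp only [Nat.succ_ne_zero, if_false, Nat.add_sub_cancel, if_true, Nat.add_eq_zero,
    and_false, one_ne_zero, ite_false, reduceIte]
  rw [Finset.sum_mul]
  simp [mul_assoc, pow_succ]

lemma LD_mul_xpow {t : R} {n : ℕ} (ht : LD A x t n) (k : ℕ) : LD A x (t * x ^ k) (n + k) := by
  induction k with
  | zero => simpa using ht
  | succ k ih =>
      rw [pow_succ, ← mul_assoc, Nat.add_succ]
      exact LD_mul_x ih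

variable {σ : A ≃+* A} {δ : A →+ A}

lemma LD_x_mul (hx : ∀ a : A, x * a = (σ a : R) * x + (δ a : R))
    {t : R} {n : ℕ} (ht : LD A x t n) : LD A x (x * t) (n + 1) := by
  obtain ⟨f, rfl⟩ := ht
  rw [Finset.mul_sum]
  have : ∀ i ∈ range n, x * ((f i : R) * x ^ i)
      = ((σ (f i) : R) * x ^ i) * x + (δ (f i) : R) * x ^ i := by
    intro i _
    rw [← mul_assoc, hx (f i), add_mul, mul_assoc, mul_assoc, ← pow_succ', pow_succ,
      ← mul_assoc]
  rw [Finset.sum_congr rfl this, Finset.sum_add_distrib]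
  refine LD_add ?_ ?_
  · rw [← Finset.sum_mul]
    exact LD_mul_x ⟨fun i => σ (f i), rfl⟩
  · exact LD_mono ⟨fun i => δ (f i), rfl⟩ (Nat.le_succ n)

lemma LD_xpow_mul (hx : ∀ a : A, x * a = (σ a : R) * x + (δ a : R))
    {t : R} {n : ℕ} (ht : LD A x t n) (k : ℕ) : LD A x (x ^ k * t) (n + k) := by
  induction k with
  | zero => simpa using ht
  | succ k ih =>
      rw [pow_succ', mul_assoc, Nat.add_succ]
      exact LD_x_mul hx ih

lemma LD_mul (hx : ∀ a : A, x * a = (σ a : R) * x + (δ a : R))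
    {t s : R} {m n : ℕ} (ht : LD A x t m) (hs : LD A x s (n + 1)) :
    LD A x (t * s) (m + n) := by
  obtain ⟨f, rfl⟩ := ht
  rw [Finset.sum_mul]
  refine LD_sum _ _ fun i hi => ?_
  rw [mul_assoc]
  have h1 : LD A x (x ^ i * s) (n + 1 + i) := LD_xpow_mul hx hs i
  have h2 : LD A x ((f i : R) * (x ^ i * s)) (n + 1 + i) := LD_lmul _ h1
  exact LD_mono h2 (by have := Finset.mem_range.1 hi; omega)

/-- Powers of `x` move across coefficients: `x^k a = σ^[k](a) x^k + (lower)`. -/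
lemma xpow_coe (hx : ∀ a : A, x * a = (σ a : R) * x + (δ a : R)) (k : ℕ) (a : A) :
    ∃ t : R, x ^ k * (a : R) = (((⇑σ)^[k] a : A) : R) * x ^ k + t ∧ LD A x t k := by
  induction k with
  | zero => exact ⟨0, by simp, LD_zero 0⟩
  | succ k ih =>
      obtain ⟨t, ht, hLD⟩ := ih
      refine ⟨(δ ((⇑σ)^[k] a) : R) * x ^ k + x * t, ?_, ?_⟩
      · rw [pow_succ', mul_assoc, ht, mul_add, ← mul_assoc, hx ((⇑σ)^[k] a), add_mul,
          mul_assoc, ← pow_succ', Function.iterate_succ_apply']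
        abel
      · exact LD_add (LD_single _ k) (LD_x_mul hx hLD)



/-- Leading term of a product. -/
lemma leading_mul (hx : ∀ a : A, x * a = (σ a : R) * x + (δ a : R))
    {m n : ℕ} (a b : A) {t w : R} (ht : LD A x t m) (hw : LD A x w n) :
    ∃ q : R, ((a : R) * x ^ m + t) * ((b : R) * x ^ n + w)
      = ((a * (⇑σ)^[m] b : A) : R) * x ^ (m + n) + q ∧ LD A x q (m + n) := by
  obtain ⟨u, hu, hLDu⟩ := xpow_coe hx m b
  refine ⟨(a : R) * (u * x ^ n) + ((a : R) * (x ^ m * w) + t * ((b : R) * x ^ n + w)), ?_, ?_⟩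
  · rw [add_mul, mul_add ((a : R) * x ^ m), mul_assoc, ← mul_assoc (x ^ m) (b : R) (x ^ n),
      hu, add_mul, mul_add, mul_assoc ((⇑σ)^[m] b : R), ← pow_add, ← mul_assoc (a : R),
      mul_assoc (a : R) (x ^ m) w]
    push_cast
    abel
  · refine LD_add (LD_lmul _ (LD_mul_xpow hLDu n)) (LD_add (LD_lmul _ ?_) ?_)
    · have := LD_xpow_mul hx hw m
      exact LD_mono this (by omega)
    · exact LD_mul hx ht (LD_add (LD_single b n) (LD_mono hw (Nat.le_succ n)))

variable (hindep : ∀ (N : ℕ) (c : Fin N → A),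
      (∑ i : Fin N, (c i : R) * x ^ (i : ℕ)) = 0 → ∀ i, c i = 0)

include hindep in
/-- Extraction: if `a x^n + (lower)` has degree `< n`, then `a = 0`. -/
lemma coeff_zero {n : ℕ} {a : A} {t u : R} (ht : LD A x t n) (hu : LD A x u n)
    (h : (a : R) * x ^ n + t = u) : a = 0 := by
  obtain ⟨f, rfl⟩ := ht
  obtain ⟨g, rfl⟩ := hu
  set F : ℕ → A := fun i => if i = n then a else f i - g i with hF
  have hsum : ∑ i ∈ range (n + 1), (F i : R) * x ^ i = 0 := by
    rw [Finset.sum_range_succ]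
    have h1 : ∀ i ∈ range n, (F i : R) * x ^ i = ((f i : R) - (g i : R)) * x ^ i := by
      intro i hi
      simp only [hF, if_neg (Nat.ne_of_lt (mem_range.1 hi))]
      push_cast
      rfl
    rw [Finset.sum_congr rfl h1]
    simp only [hF, if_pos rfl]
    have h2 : ∀ i ∈ range n, ((f i : R) - (g i : R)) * x ^ i
        = (f i : R) * x ^ i - (g i : R) * x ^ i := fun i _ => sub_mul _ _ _
    rw [Finset.sum_congr rfl h2, Finset.sum_sub_distrib, ← h]
    abel
  have hz := hindep (n + 1) (fun i => F i.val)
    (by rw [Fin.sum_univ_eq_sum_range (fun i => (F i : R) * x ^ i) (n + 1)]; exact hsum)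
    ⟨n, Nat.lt_succ_self n⟩
  simpa [hF] using hz

include hindep in
lemma lead_eq {m n : ℕ} {a b : A} {t w : R} (ht : LD A x t m) (hw : LD A x w n)
    (h : (a : R) * x ^ m + t = (b : R) * x ^ n + w) (ha : a ≠ 0) (hb : b ≠ 0) :
    m = n ∧ a = b := by
  rcases lt_trichotomy m n with hmn | hmn | hmn
  · exfalso
    apply hb
    exact coeff_zero hindep hw
      (LD_mono (LD_add (LD_single a m) (LD_mono ht (Nat.le_succ m))) (by omega)) h.symm
  · subst hmn
    refine ⟨rfl, ?_⟩
    have hab : ((a - b : A) : R) * x ^ m + (t - w) = 0 := by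
      push_cast
      rw [sub_mul]
      have h' := sub_eq_zero_of_eq h
      rw [← h']
      abel
    have h2 : a - b = 0 := coeff_zero hindep (LD_sub ht hw) (LD_zero m) hab
    exact sub_eq_zero.1 h2
  · exfalso
    apply ha
    exact coeff_zero hindep ht
      (LD_mono (LD_add (LD_single b n) (LD_mono hw (Nat.le_succ n))) (by omega)) h

variable (hspan : ∀ r : R, ∃ (N : ℕ) (c : Fin N → A), r = ∑ i, (c i : R) * x ^ (i : ℕ))

include hspan in
lemma exists_rep (r : R) :
    ∃ (N : ℕ) (f : ℕ → A), (∀ i, N ≤ i → f i = 0) ∧ r = ∑ i ∈ range N, (f i : R) * x ^ i := by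
  obtain ⟨N, c, hc⟩ := hspan r
  refine ⟨N, fun i => if h : i < N then c ⟨i, h⟩ else 0, fun i hi => dif_neg (by omega), ?_⟩
  rw [hc, ← Fin.sum_univ_eq_sum_range
    (fun i => (((if h : i < N then c ⟨i, h⟩ else 0 : A)) : R) * x ^ i) N]
  refine Finset.sum_congr rfl fun i _ => ?_
  congr 1
  rw [dif_pos i.isLt]

lemma exists_leading_aux :
    ∀ (N : ℕ) (f : ℕ → A) (r : R), r = ∑ i ∈ range N, (f i : R) * x ^ i → r ≠ 0 →
      ∃ (n : ℕ) (a : A) (t : R), a ≠ 0 ∧ LD A x t n ∧ r = (a : R) * x ^ n + t := by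
  intro N
  induction N with
  | zero => intro f r hr hr0; exact absurd (by simpa using hr) hr0
  | succ n ih =>
      intro f r hr hr0
      by_cases h : f n = 0
      · exact ih f r (by rw [hr, Finset.sum_range_succ, h]; simp) hr0
      · exact ⟨n, f n, _, h, ⟨f, rfl⟩, by rw [hr, Finset.sum_range_succ, add_comm]⟩

include hspan in
lemma exists_leading {r : R} (hr : r ≠ 0) :
    ∃ (n : ℕ) (a : A) (t : R), a ≠ 0 ∧ LD A x t n ∧ r = (a : R) * x ^ n + t := by
  obtain ⟨N, f, _, hrep⟩ := exists_rep hspan r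
  exact exists_leading_aux N f r hrep hr

include hindep in
lemma coeffs_zero {N : ℕ} {f : ℕ → A} (h : ∑ i ∈ range N, (f i : R) * x ^ i = 0) :
    ∀ i, i < N → f i = 0 := by
  intro i hi
  have hz := hindep N (fun j => f j.val)
    (by rw [Fin.sum_univ_eq_sum_range (fun i => (f i : R) * x ^ i) N]; exact h) ⟨i, hi⟩
  exact hz

include hindep in
lemma coeff_unique {N : ℕ} {f g : ℕ → A}
    (h : ∑ i ∈ range N, (f i : R) * x ^ i = ∑ i ∈ range N, (g i : R) * x ^ i) :
    ∀ i, i < N → f i = g i := by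
  intro i hi
  have hz : ∑ i ∈ range N, ((f - g) i : R) * x ^ i = 0 := by
    have : ∀ i ∈ range N, ((f - g) i : R) * x ^ i
        = (f i : R) * x ^ i - (g i : R) * x ^ i := by
      intro i _
      simp only [Pi.sub_apply]
      push_cast
      rw [sub_mul]
    rw [Finset.sum_congr rfl this, Finset.sum_sub_distrib, h]
    abel
  have h2 : f i - g i = 0 := coeffs_zero hindep hz i hi
  exact sub_eq_zero.1 h2

end JordanAux

/-- Jordan's theorem for Ore extensions `R = A[x; σ, δ]`: if `c = dx + e` (`d ≠ 0`) is a
normal element of `R` with associated automorphism `β`, then `β(A) = A`, `d` is normal in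
`A` with `β(a)d = dσ(a)`; moreover if `e` is regular modulo `dA = Ad` then `R/Rc` is a
domain (i.e. `Rc` is a proper completely prime ideal). -/
theorem jordan_domain_theorem {R : Type*} [Ring R] [IsDomain R]
    (A : Subring R) (σ : A ≃+* A) (δ : A →+ A)
    (hδ : ∀ a b : A, δ (a * b) = σ a * δ b + δ a * b)
    (x : R) (hx : ∀ a : A, x * a = (σ a : R) * x + (δ a : R))
    (hspan : ∀ r : R, ∃ (N : ℕ) (c : Fin N → A), r = ∑ i, (c i : R) * x ^ (i : ℕ))
    (hindep : ∀ (N : ℕ) (c : Fin N → A),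
      (∑ i : Fin N, (c i : R) * x ^ (i : ℕ)) = 0 → ∀ i, c i = 0)
    (d e : A) (hd : d ≠ 0)
    (β : R ≃+* R) (hβ : ∀ r : R, ((d : R) * x + (e : R)) * r = β r * ((d : R) * x + (e : R))) :
    (∀ a : A, β (a : R) ∈ A) ∧
    (∀ a : A, ∃ b : A, β (b : R) = (a : R)) ∧
    (∀ a : A, ∃ b : A, (a : R) * (d : R) = (d : R) * (b : R)) ∧
    (∀ a : A, ∃ b : A, (d : R) * (a : R) = (b : R) * (d : R)) ∧
    (∀ a : A, β (a : R) * (d : R) = (d : R) * (σ a : R)) ∧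
    ((∀ a : A, ((∃ b : A, e * a = d * b) → ∃ b : A, a = d * b) ∧
        ((∃ b : A, a * e = d * b) → ∃ b : A, a = d * b)) →
      (¬ ∃ v : R, (1 : R) = v * ((d : R) * x + (e : R))) ∧
      ∀ r s : R, (∃ v : R, r * s = v * ((d : R) * x + (e : R))) →
        (∃ v : R, r = v * ((d : R) * x + (e : R))) ∨
        (∃ v : R, s = v * ((d : R) * x + (e : R)))) := by
  classical
  open JordanAux Finset in
  set c : R := (d : R) * x + (e : R) with hc
  -- ## basic helpers
  have hAinj : ∀ u v : A, (u : R) = (v : R) → u = v := fun u v h => Subtype.ext h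
  have hAne : ∀ u : A, u ≠ 0 → (u : R) ≠ 0 := fun u hu h => hu (hAinj u 0 (by simpa using h))
  have hd' : (d : R) ≠ 0 := hAne d hd
  have hone : (1 : A) ≠ 0 := fun h => hd (by rw [← mul_one d, h, mul_zero])
  have hAmul_ne : ∀ u v : A, u ≠ 0 → v ≠ 0 → u * v ≠ 0 := by
    intro u v hu hv h0
    have h1 : (u : R) * (v : R) = 0 := by exact_mod_cast congrArg (fun z : A => (z : R)) h0
    exact mul_ne_zero (hAne u hu) (hAne v hv) h1
  have hσne : ∀ a : A, a ≠ 0 → σ a ≠ 0 := fun a ha h =>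
    ha (σ.injective (h.trans (map_zero σ).symm))
  have hiter0 : ∀ k : ℕ, (⇑σ)^[k] (0 : A) = 0 := by
    intro k
    induction k with
    | zero => rfl
    | succ k ih => rw [Function.iterate_succ_apply', ih, map_zero]
  have hiterne : ∀ (k : ℕ) (a : A), a ≠ 0 → (⇑σ)^[k] a ≠ 0 := by
    intro k a ha h
    exact ha ((σ.injective.iterate k) (h.trans (hiter0 k).symm))
  have hiter_mul : ∀ (k : ℕ) (a b : A), (⇑σ)^[k] (a * b) = (⇑σ)^[k] a * (⇑σ)^[k] b := by
    intro k
    induction k with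
    | zero => intro a b; rfl
    | succ k ih =>
        intro a b
        rw [Function.iterate_succ_apply', Function.iterate_succ_apply',
          Function.iterate_succ_apply', ih, map_mul]
  have hx0 : x ≠ 0 := by
    intro h0
    have hz := hindep 2 (fun i => if (i : ℕ) = 1 then 1 else 0) (by simp [Fin.sum_univ_two, h0])
      ⟨1, one_lt_two⟩
    simp at hz
  have hc1 : c = (d : R) * x ^ 1 + (e : R) := by rw [hc, pow_one]
  have hca : ∀ a : A, c * (a : R) = ((d * σ a : A) : R) * x ^ 1 + ((d * δ a + e * a : A) : R) := by
    intro a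
    rw [hc, add_mul, mul_assoc, hx a]
    push_cast
    noncomm_ring
  have pair : ∀ a₁ a₀ b₁ b₀ : A,
      (a₁ : R) * x ^ 1 + (a₀ : R) = (b₁ : R) * x ^ 1 + (b₀ : R) → a₁ = b₁ ∧ a₀ = b₀ := by
    intro a₁ a₀ b₁ b₀ h
    have h1 : ((a₁ - b₁ : A) : R) * x ^ 1 + ((a₀ : R) - (b₀ : R)) = 0 := by
      push_cast
      rw [sub_mul]
      have h' := sub_eq_zero_of_eq h
      rw [← h']
      abel
    have e1 : a₁ - b₁ = 0 :=
      coeff_zero hindep (LD_sub (LD_coe a₀) (LD_coe b₀)) (LD_zero 1) h1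
    have e1' : a₁ = b₁ := sub_eq_zero.1 e1
    refine ⟨e1', hAinj _ _ ?_⟩
    rw [e1'] at h
    exact add_left_cancel h
  -- ## β maps A to A, with the two key coefficient identities
  have hA : ∀ a : A, ∃ b : A, β (a : R) = (b : R) ∧ b * d = d * σ a ∧ b * e = d * δ a + e * a := by
    intro a
    by_cases ha : a = 0
    · exact ⟨0, by simp [ha], by simp [ha], by simp [ha]⟩
    · have hba : β (a : R) ≠ 0 := fun h =>
        ha (hAinj a 0 (β.injective (by simpa using h)))
      obtain ⟨n, g, t, hg, hLDt, hform⟩ := exists_leading hspan hba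
      obtain ⟨q, hq, hLDq⟩ := leading_mul hx g d hLDt (LD_coe e)
      have heq := (hβ (a : R)).symm
      rw [hca a, hform, hc1, hq] at heq
      rcases Nat.eq_zero_or_pos n with hn | hn
      · subst hn
        have ht0 : t = 0 := LD_zero_deg hLDt
        have hβa : β (a : R) = (g : R) := by rw [hform, ht0, pow_zero, mul_one, add_zero]
        have hgc : ((g * d : A) : R) * x ^ 1 + ((g * e : A) : R)
            = ((d * σ a : A) : R) * x ^ 1 + ((d * δ a + e * a : A) : R) := by
          rw [← hca a, hβ (a : R), hβa, hc1]
          push_cast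
          noncomm_ring
        obtain ⟨h1, h2⟩ := pair _ _ _ _ hgc
        exact ⟨g, hβa, h1, h2⟩
      · exfalso
        have hu : LD A x (((d * σ a : A) : R) * x ^ 1 + ((d * δ a + e * a : A) : R)) (n + 1) :=
          LD_mono (LD_add (LD_single _ 1) (LD_mono (LD_coe _) one_le_two)) (by omega)
        have := coeff_zero hindep hLDq hu heq
        exact hAmul_ne g ((⇑σ)^[n] d) hg (hiterne n d hd) this
  -- ## β⁻¹ maps A to A
  have hB : ∀ a : A, ∃ g : A, β (g : R) = (a : R) ∧ a * d = d * σ g ∧ a * e = d * δ g + e * g := by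
    intro a
    by_cases ha : a = 0
    · exact ⟨0, by simp [ha], by simp [ha], by simp [ha]⟩
    · set r : R := β.symm (a : R) with hrdef
      have hβr : β r = (a : R) := β.apply_symm_apply (a : R)
      have hr0 : r ≠ 0 := by
        intro h
        exact hAne a ha (by rw [← hβr, h, map_zero])
      have heq : c * r = ((a * d : A) : R) * x ^ 1 + ((a * e : A) : R) := by
        rw [hβ r, hβr, hc1]
        push_cast
        noncomm_ring
      obtain ⟨n, g, t, hg, hLDt, hform⟩ := exists_leading hspan hr0
      obtain ⟨q, hq, hLDq⟩ := leading_mul hx d g (LD_coe e) hLDt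
      rw [← hform, ← hc1] at hq
      rw [hq] at heq
      rcases Nat.eq_zero_or_pos n with hn | hn
      · subst hn
        have ht0 : t = 0 := LD_zero_deg hLDt
        have hrg : r = (g : R) := by rw [hform, ht0, pow_zero, mul_one, add_zero]
        have hgc : ((d * σ g : A) : R) * x ^ 1 + ((d * δ g + e * g : A) : R)
            = ((a * d : A) : R) * x ^ 1 + ((a * e : A) : R) := by
          rw [← hca g, ← hrg]
          rw [hβ r, hβr, hc1]
          push_cast
          noncomm_ring
        obtain ⟨h1, h2⟩ := pair _ _ _ _ hgc
        exact ⟨g, by rw [← hrg]; exact hβr, h1.symm, h2.symm⟩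
      · exfalso
        have hu : LD A x (((a * d : A) : R) * x ^ 1 + ((a * e : A) : R)) (1 + n) :=
          LD_mono (LD_add (LD_single _ 1) (LD_mono (LD_coe _) one_le_two)) (by omega)
        have := coeff_zero hindep hLDq hu heq
        exact hAmul_ne d ((⇑σ)^[1] g) hd (hiterne 1 g hg) this
  -- ## normality of d in A
  have hdA : ∀ z : A, ∃ z' : A, z * d = d * z' ∧ (z ≠ 0 → z' ≠ 0) := by
    intro z
    obtain ⟨g, _, h2, _⟩ := hB z
    refine ⟨σ g, h2, fun hz hz' => ?_⟩
    exact hAmul_ne z d hz hd (by rw [h2, hz', mul_zero])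
  have hAd : ∀ z : A, ∃ z' : A, d * z = z' * d ∧ (z ≠ 0 → z' ≠ 0) := by
    intro z
    obtain ⟨b, _, h2, _⟩ := hA (σ.symm z)
    rw [RingEquiv.apply_symm_apply] at h2
    refine ⟨b, h2.symm, fun hz hb => ?_⟩
    exact hAmul_ne d z hd hz (by rw [← h2, hb, zero_mul])
  -- ## σ d = d * p  (via β⁻¹ x)
  have hxc : x * c = ((σ d : A) : R) * x ^ 2 + (((δ d + σ e : A) : R) * x ^ 1 + ((δ e : A) : R)) := by
    rw [hc, mul_add, ← mul_assoc, hx d, hx e]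
    push_cast
    noncomm_ring
  have hLDxc : LD A x (((δ d + σ e : A) : R) * x ^ 1 + ((δ e : A) : R)) 2 :=
    LD_add (LD_single _ 1) (LD_mono (LD_coe _) one_le_two)
  have hD1 : ∃ p : A, σ d = d * p := by
    set r : R := β.symm x with hrdef
    have hβr : β r = x := β.apply_symm_apply x
    have hr0 : r ≠ 0 := fun h => hx0 (by rw [← hβr, h, map_zero])
    have heq : c * r = x * c := by rw [hβ r, hβr]
    obtain ⟨n, g, t, hg, hLDt, hform⟩ := exists_leading hspan hr0
    obtain ⟨q, hq, hLDq⟩ := leading_mul hx d g (LD_coe e) hLDt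
    rw [← hform, ← hc1] at hq
    rw [hq, hxc] at heq
    obtain ⟨hmn, hco⟩ := lead_eq hindep hLDq hLDxc heq
      (hAmul_ne d ((⇑σ)^[1] g) hd (hiterne 1 g hg)) (hσne d hd)
    rw [Function.iterate_one] at hco
    exact ⟨σ g, hco.symm⟩
  -- ## d = u * σ^[k] d  (via β x)
  have hcx : c * x = (d : R) * x ^ 2 + ((e : A) : R) * x ^ 1 := by
    rw [hc]
    noncomm_ring
  have hβx : ∃ u : A, d = u * σ d := by
    have hr0 : β x ≠ 0 := fun h => hx0 (β.injective (by simpa using h))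
    have heq : β x * c = c * x := (hβ x).symm
    obtain ⟨n, g, t, hg, hLDt, hform⟩ := exists_leading hspan hr0
    obtain ⟨q, hq, hLDq⟩ := leading_mul hx g d hLDt (LD_coe e)
    rw [← hform, ← hc1] at hq
    rw [hq, hcx] at heq
    have hdx2 : (d : R) * x ^ 2 + ((e : A) : R) * x ^ 1 = ((d : A) : R) * x ^ 2 + ((e : A) : R) * x ^ 1 := rfl
    rw [hdx2] at heq
    obtain ⟨hmn, hco⟩ := lead_eq hindep hLDq (LD_single e 1) heq
      (hAmul_ne g ((⇑σ)^[n] d) hg (hiterne n d hd)) hd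
    have hn1 : n = 1 := by omega
    subst hn1
    rw [Function.iterate_one] at hco
    exact ⟨g, hco.symm⟩
  have hD2 : ∀ k : ℕ, ∃ u : A, d = u * (⇑σ)^[k] d := by
    obtain ⟨g, hg⟩ := hβx
    intro k
    induction k with
    | zero => exact ⟨1, by simp⟩
    | succ k ih =>
        obtain ⟨u, hu⟩ := ih
        refine ⟨u * (⇑σ)^[k] g, ?_⟩
        have h1 : (⇑σ)^[k] d = (⇑σ)^[k] g * (⇑σ)^[k+1] d := by
          conv_lhs => rw [hg]
          rw [hiter_mul k g (σ d), Function.iterate_succ_apply]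
        refine hu.trans ?_
        rw [h1, mul_assoc]
  refine ⟨?_, ?_, ?_, ?_, ?_, ?_⟩
  · intro a
    obtain ⟨b, hb, _, _⟩ := hA a
    rw [hb]
    exact b.2
  · intro a
    obtain ⟨g, hg, _, _⟩ := hB a
    exact ⟨g, hg⟩
  · intro a
    obtain ⟨g, _, h2, _⟩ := hB a
    exact ⟨σ g, by exact_mod_cast congrArg (fun z : A => (z : R)) h2⟩
  · intro a
    obtain ⟨b, h2, _⟩ := hAd a
    exact ⟨b, by exact_mod_cast congrArg (fun z : A => (z : R)) h2⟩
  · intro a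
    obtain ⟨b, hb, h2, _⟩ := hA a
    rw [hb]
    exact_mod_cast congrArg (fun z : A => (z : R)) h2
  intro hreg
  -- ## β d ∈ dA
  have hβd : ∃ p : A, β (d : R) = (d : R) * (p : R) := by
    obtain ⟨b, hb, hbd, _⟩ := hA d
    obtain ⟨p0, hp0⟩ := hD1
    obtain ⟨p1, hp1, _⟩ := hAd p0
    have hσd' : σ d = p1 * d := by rw [hp0, hp1]
    have h1 : b * d = (d * p1) * d := by rw [hbd, hσd', mul_assoc]
    have h2 : (b : R) = (d : R) * (p1 : R) := by
      have h3 : (b : R) * (d : R) = ((d : R) * (p1 : R)) * (d : R) := by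
        exact_mod_cast congrArg (fun z : A => (z : R)) h1
      exact mul_right_cancel₀ hd' h3
    exact ⟨p1, by rw [hb, h2]⟩
  -- ## A ∩ Rc = 0
  have hF6 : ∀ (a : A) (v : R), (a : R) = v * c → a = 0 := by
    intro a v hv
    by_cases hv0 : v = 0
    · rw [hv0, zero_mul] at hv
      exact hAinj a 0 (by simpa using hv)
    · exfalso
      obtain ⟨n, g, t, hg, hLDt, hform⟩ := exists_leading hspan hv0
      obtain ⟨q, hq, hLDq⟩ := leading_mul hx g d hLDt (LD_coe e)
      rw [← hform, ← hc1] at hq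
      rw [hq] at hv
      have := coeff_zero hindep hLDq (LD_mono (LD_coe a) (by omega)) hv.symm
      exact hAmul_ne g _ hg (hiterne n d hd) this
  -- ## reduction: d^k r ≡ element of A mod Rc
  have hF5 : ∀ (n : ℕ) (r : R), LD A x r n →
      ∃ (k : ℕ) (b : A) (v : R), (d : R) ^ k * r = (b : R) + v * c := by
    intro n
    induction n with
    | zero =>
        intro r h
        rw [LD_zero_deg h]
        exact ⟨0, 0, 0, by simp⟩
    | succ n ih =>
        intro r h
        obtain ⟨f, hf⟩ := h
        rcases n with _ | m
        · refine ⟨0, f 0, 0, ?_⟩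
          rw [hf, Finset.sum_range_one]
          simp
        · rw [Finset.sum_range_succ] at hf
          obtain ⟨z', hz', _⟩ := hAd (f (m + 1))
          obtain ⟨u, hu⟩ := hD2 m
          have hdf : d * f (m + 1) = (z' * u) * (⇑σ)^[m] d := by
            rw [hz']
            conv_lhs => rw [hu]
            exact (mul_assoc z' u _).symm
          obtain ⟨t₄, h4, hLD4⟩ := xpow_coe hx m d
          obtain ⟨t₅, h5, hLD5⟩ := xpow_coe hx m e
          have hxmc : x ^ m * c = (((⇑σ)^[m] d : A) : R) * x ^ (m + 1)
              + (t₄ * x + (((⇑σ)^[m] e : A) : R) * x ^ m + t₅) := by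
            rw [hc, mul_add, ← mul_assoc, h4, h5, add_mul, mul_assoc, ← pow_succ]
            abel
          have hLDt6 : LD A x (t₄ * x + (((⇑σ)^[m] e : A) : R) * x ^ m + t₅) (m + 1) :=
            LD_add (LD_add (LD_mul_x hLD4) (LD_single _ m)) (LD_mono hLD5 (Nat.le_succ m))
          have hwc : ((z' * u : A) : R) * (x ^ m * c)
              = ((z' * u * (⇑σ)^[m] d : A) : R) * x ^ (m + 1)
              + ((z' * u : A) : R) * (t₄ * x + (((⇑σ)^[m] e : A) : R) * x ^ m + t₅) := by
            rw [hxmc, mul_add, ← mul_assoc]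
            push_cast
            rfl
          set r₃ : R := (d : R) * r - ((z' * u : A) : R) * (x ^ m * c) with hr3
          have hLDr₃ : LD A x r₃ (m + 1) := by
            have hdf' : (d : R) * ((f (m + 1) : R) * x ^ (m + 1))
                = ((z' * u * (⇑σ)^[m] d : A) : R) * x ^ (m + 1) := by
              rw [← mul_assoc]
              congr 1
              exact_mod_cast congrArg (fun z : A => (z : R)) hdf
            have h7 : r₃ = (d : R) * (∑ i ∈ Finset.range (m + 1), (f i : R) * x ^ i)
                - ((z' * u : A) : R) * (t₄ * x + (((⇑σ)^[m] e : A) : R) * x ^ m + t₅) := by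
              rw [hr3, hf, hwc, mul_add, hdf']
              abel
            rw [h7]
            exact LD_sub (LD_lmul d ⟨f, rfl⟩) (LD_lmul _ hLDt6)
          obtain ⟨k, b, v, hk⟩ := ih r₃ hLDr₃
          refine ⟨k + 1, b, v + (d : R) ^ k * (((z' * u : A) : R) * x ^ m), ?_⟩
          have h9 : (d : R) * r = r₃ + ((z' * u : A) : R) * (x ^ m * c) := by
            rw [hr3]
            abel
          calc (d : R) ^ (k + 1) * r = (d : R) ^ k * ((d : R) * r) := by
                rw [pow_succ, mul_assoc]
            _ = (d : R) ^ k * r₃ + (d : R) ^ k * (((z' * u : A) : R) * (x ^ m * c)) := by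
                rw [h9, mul_add]
            _ = (b : R) + (v + (d : R) ^ k * (((z' * u : A) : R) * x ^ m)) * c := by
                rw [hk, add_mul]
                noncomm_ring
  -- ## main step: d is regular modulo Rc
  have hG1 : ∀ r v : R, (d : R) * r = v * c → ∃ z, r = z * c := by
    intro r v hv
    have hcs : c * β.symm v = v * c := by rw [hβ (β.symm v), RingEquiv.apply_symm_apply]
    obtain ⟨N, g, hgN, hgrep⟩ := exists_rep hspan (β.symm v)
    obtain ⟨N', f, hfN, hfrep⟩ := exists_rep hspan r
    have hxS : x * β.symm v = (∑ j ∈ Finset.range N, ((σ (g j) : A) : R) * x ^ (j + 1))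
        + ∑ j ∈ Finset.range N, ((δ (g j) : A) : R) * x ^ j := by
      rw [hgrep, Finset.mul_sum]
      rw [Finset.sum_congr rfl (fun j _ => by
        rw [← mul_assoc, hx (g j), add_mul, mul_assoc, ← pow_succ'])]
      rw [Finset.sum_add_distrib]
    have h3 : c * β.symm v = (∑ j ∈ Finset.range N, ((d * σ (g j) : A) : R) * x ^ (j + 1))
        + ∑ j ∈ Finset.range N, ((d * δ (g j) + e * g j : A) : R) * x ^ j := by
      have e1 : (d : R) * (x * β.symm v)
          = ∑ j ∈ Finset.range N, ((d * σ (g j) : A) : R) * x ^ (j + 1)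
          + ∑ j ∈ Finset.range N, ((d * δ (g j) : A) : R) * x ^ j := by
        rw [hxS, mul_add, Finset.mul_sum, Finset.mul_sum]
        congr 1
        · exact Finset.sum_congr rfl fun j _ => by push_cast; rw [mul_assoc]
        · exact Finset.sum_congr rfl fun j _ => by push_cast; rw [mul_assoc]
      have e2 : (e : R) * β.symm v = ∑ j ∈ Finset.range N, ((e * g j : A) : R) * x ^ j := by
        rw [hgrep, Finset.mul_sum]
        exact Finset.sum_congr rfl fun j _ => by push_cast; rw [mul_assoc]
      rw [hc, add_mul, mul_assoc, e1, e2, add_assoc, ← Finset.sum_add_distrib]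
      congr 1
      exact Finset.sum_congr rfl fun j _ => by push_cast; rw [add_mul]
    set gp : ℕ → A := fun k => Nat.rec 0 (fun j _ => g j) k with hgp
    set C : ℕ → A := fun k => d * σ (gp k) + (d * δ (g k) + e * g k) with hC
    have h4 : ∑ j ∈ Finset.range N, ((d * σ (g j) : A) : R) * x ^ (j + 1)
        = ∑ k ∈ Finset.range (N + 1), ((d * σ (gp k) : A) : R) * x ^ k := by
      rw [Finset.sum_range_succ' (fun k => ((d * σ (gp k) : A) : R) * x ^ k) N]
      have hgp0 : gp 0 = 0 := rfl
      have : ∀ j ∈ Finset.range N, ((d * σ (gp (j + 1)) : A) : R) * x ^ (j + 1)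
          = ((d * σ (g j) : A) : R) * x ^ (j + 1) := fun j _ => rfl
      rw [Finset.sum_congr rfl this, hgp0, map_zero, mul_zero]
      simp
    have h5 : ∑ j ∈ Finset.range N, ((d * δ (g j) + e * g j : A) : R) * x ^ j
        = ∑ k ∈ Finset.range (N + 1), ((d * δ (g k) + e * g k : A) : R) * x ^ k := by
      rw [Finset.sum_range_succ, hgN N le_rfl]
      simp
    have h6 : c * β.symm v = ∑ k ∈ Finset.range (N + 1), (C k : R) * x ^ k := by
      rw [h3, h4, h5, ← Finset.sum_add_distrib]
      exact Finset.sum_congr rfl fun k _ => by simp only [hC]; push_cast; noncomm_ring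
    have h7 : (d : R) * r = ∑ i ∈ Finset.range N', ((d * f i : A) : R) * x ^ i := by
      rw [hfrep, Finset.mul_sum]
      exact Finset.sum_congr rfl fun i _ => by push_cast; rw [mul_assoc]
    have hCz : ∀ k, N + 1 ≤ k → C k = 0 := by
      intro k hk
      rcases k with _ | j
      · omega
      · have hgj : g j = 0 := hgN j (by omega)
        have hgk : g (j + 1) = 0 := hgN (j + 1) (by omega)
        show d * σ (g j) + (d * δ (g (j + 1)) + e * g (j + 1)) = 0
        rw [hgj, hgk]
        simp
    have hfz : ∀ i, N' ≤ i → d * f i = 0 := fun i hi => by rw [hfN i hi, mul_zero]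
    have hmain : ∑ k ∈ Finset.range (max (N + 1) N'), ((d * f k : A) : R) * x ^ k
        = ∑ k ∈ Finset.range (max (N + 1) N'), (C k : R) * x ^ k := by
      rw [sum_pad hfz (le_max_right _ _), sum_pad hCz (le_max_left _ _), ← h7, ← h6, hv, hcs]
    have hmatch := coeff_unique hindep hmain
    have hgd : ∀ k, ∃ w : A, g k = d * w := by
      intro k
      by_cases hk : k < N
      · have hk1 : k < max (N + 1) N' := lt_of_lt_of_le (by omega) (le_max_left _ _)
        have hck := hmatch k hk1
        have hck' : d * f k = d * σ (gp k) + (d * δ (g k) + e * g k) := hck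
        have he : e * g k = d * (f k - σ (gp k) - δ (g k)) := by
          rw [mul_sub, mul_sub, hck']
          abel
        exact (hreg (g k)).1 ⟨_, he⟩
      · exact ⟨0, by rw [hgN k (by omega), mul_zero]⟩
    choose w hw using hgd
    have hsW : β.symm v = (d : R) * ∑ j ∈ Finset.range N, (w j : R) * x ^ j := by
      rw [hgrep, Finset.mul_sum]
      refine Finset.sum_congr rfl fun j _ => ?_
      rw [hw j]
      push_cast
      rw [mul_assoc]
    obtain ⟨p, hp⟩ := hβd
    have final : (d : R) * r
        = (d : R) * ((p : R) * (β (∑ j ∈ Finset.range N, (w j : R) * x ^ j) * c)) := by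
      rw [hv, ← hcs, hsW, hβ ((d : R) * ∑ j ∈ Finset.range N, (w j : R) * x ^ j), map_mul, hp]
      noncomm_ring
    refine ⟨(p : R) * β (∑ j ∈ Finset.range N, (w j : R) * x ^ j), ?_⟩
    have hfin := mul_left_cancel₀ hd' final
    rw [hfin, mul_assoc]
  -- ## iterated version
  have hG1k : ∀ (k : ℕ) (r v : R), (d : R) ^ k * r = v * c → ∃ z, r = z * c := by
    intro k
    induction k with
    | zero =>
        intro r v h
        rw [pow_zero, one_mul] at h
        exact ⟨v, h⟩
    | succ k ih =>
        intro r v h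
        rw [pow_succ, mul_assoc] at h
        obtain ⟨z, hz⟩ := ih ((d : R) * r) v h
        exact hG1 r z hz
  -- ## commuting powers of d past elements of A
  have hcommk : ∀ (a : A) (k : ℕ), ∃ a' : A,
      (a ≠ 0 → a' ≠ 0) ∧ (d : R) ^ k * (a : R) = (a' : R) * (d : R) ^ k := by
    intro a k
    induction k with
    | zero => exact ⟨a, fun h => h, by simp⟩
    | succ k ih =>
        obtain ⟨a', hne, ha'⟩ := ih
        obtain ⟨a'', h2, hne2⟩ := hAd a'
        refine ⟨a'', fun h0 => hne2 (hne h0), ?_⟩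
        have h2' : (d : R) * (a' : R) = (a'' : R) * (d : R) := by
          exact_mod_cast congrArg (fun z : A => (z : R)) h2
        rw [pow_succ', mul_assoc, ha', ← mul_assoc, h2', mul_assoc, ← pow_succ']
  -- ## nonzero elements of A are regular mod Rc
  have hG2 : ∀ (a : A), a ≠ 0 → ∀ (s v : R), (a : R) * s = v * c → ∃ z, s = z * c := by
    intro a ha s v hv
    obtain ⟨N, f, _, hrep⟩ := exists_rep hspan s
    obtain ⟨k, b, u, hk⟩ := hF5 N s ⟨f, hrep⟩
    obtain ⟨a', hane, ha'⟩ := hcommk a k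
    have h1 : (a' : R) * ((d : R) ^ k * s) = ((d : R) ^ k * v) * c := by
      rw [← mul_assoc, ← ha', mul_assoc, hv, ← mul_assoc]
    rw [hk, mul_add] at h1
    have h2 : ((a' * b : A) : R) = ((d : R) ^ k * v - (a' : R) * u) * c := by
      push_cast
      rw [sub_mul, eq_sub_iff_add_eq, mul_assoc]
      exact h1
    have hb0 : a' * b = 0 := hF6 _ _ h2
    have hbz : b = 0 := by
      have hz : (a' : R) * (b : R) = 0 := by
        exact_mod_cast congrArg (fun z : A => (z : R)) hb0
      rcases mul_eq_zero.1 hz with h | h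
      · exact absurd h (hAne a' (hane ha))
      · exact hAinj b 0 (by simpa using h)
    rw [hbz] at hk
    have hk' : (d : R) ^ k * s = u * c := by rw [hk]; simp
    exact hG1k k s u hk'
  -- ## conclusion
  refine ⟨?_, ?_⟩
  · rintro ⟨v, hv⟩
    have h1 : ((1 : A) : R) = v * c := by rw [← hv]; norm_cast
    exact hone (hF6 1 v h1)
  · rintro r s ⟨v, hv⟩
    obtain ⟨N, f, _, hfrep⟩ := exists_rep hspan r
    obtain ⟨k, b, u, hk⟩ := hF5 N r ⟨f, hfrep⟩
    by_cases hb : b = 0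
    · left
      refine hG1k k r u ?_
      rw [hk, hb]
      simp
    · right
      have h2 : (d : R) ^ k * (r * s) = (d : R) ^ k * (v * c) := by rw [hv]
      have h3 : ((b : R) + u * c) * s = (d : R) ^ k * (v * c) := by
        rw [← hk, mul_assoc]
        exact h2
      rw [add_mul, mul_assoc, hβ s] at h3
      have h4 : (b : R) * s = ((d : R) ^ k * v - u * β s) * c := by
        rw [sub_mul, eq_sub_iff_add_eq, mul_assoc u (β s) c, mul_assoc ((d : R) ^ k) v c]
        exact h3
      obtain ⟨z, hz⟩ := hG2 b hb s _ h4
      exact ⟨z, hz⟩
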